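/- Let N ≥ 1, ℓ = (ℓ₁, …, ℓ_N) ∈ ℝ^N, let z₁, …, z_N ∈ ℂ be pairwise distinct, and let c ∈ ℂ be such that z_i + c ≠ z_j for all i ≠ j. Then ∑_{i=1}^N ∏_{j ≠ i} ((z_i + c − z_j)/(z_i − z_j)) · 𝓑_ℓ(z₁, …, z_{i−1}, z_i + c, z_{i+1}, …, z_N) = ( ∑_{j=1}^N e^{c ℓ_j} ) · 𝓑_ℓ(z₁, …, z_N). -/

import Mathlib

open Complex Finset Filter Topology

noncomputable section

/-- Vandermonde product `Δ(w) = ∏_{i<j} (w i - w j)`. -/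
def vprod {m : ℕ} (w : Fin m → ℂ) : ℂ :=
  ∏ i : Fin m, ∏ j : Fin m, if i < j then w i - w j else 1

/-- The multivariate Bessel function `𝓑_ℓ(w) = det(e^{w_i ℓ_j}) / Δ(w)`. -/
def besselFun (N : ℕ) (l : Fin N → ℝ) (w : Fin N → ℂ) : ℂ :=
  (Matrix.of fun i j : Fin N => Complex.exp (w i * (l j : ℂ))).det / vprod w

-- lemma: det updateRow as sum over adjugate
lemma det_updateRow_eq_sum {N : ℕ} (A : Matrix (Fin N) (Fin N) ℂ) (i : Fin N) (v : Fin N → ℂ) :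
    (A.updateRow i v).det = ∑ j, Matrix.adjugate A j i * v j := by
  rw [← Matrix.cramer_transpose_apply, Matrix.cramer_eq_adjugate_mulVec,
    Matrix.mulVec, dotProduct]
  simp [← Matrix.adjugate_transpose]

lemma sum_det_updateRow {N : ℕ} (A : Matrix (Fin N) (Fin N) ℂ) (d : Fin N → ℂ) :
    ∑ i, (A.updateRow i (fun j => A i j * d j)).det = (∑ j, d j) * A.det := by
  simp_rw [det_updateRow_eq_sum]
  rw [Finset.sum_comm]
  have : ∀ j : Fin N, ∑ i, Matrix.adjugate A j i * (A i j * d j) = d j * A.det := by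
    intro j
    have h : (Matrix.adjugate A * A) j j = A.det := by
      rw [Matrix.adjugate_mul]; simp
    rw [← h, Matrix.mul_apply, Finset.mul_sum]
    apply Finset.sum_congr rfl; intro k _; ring
  simp_rw [this]
  rw [Finset.sum_mul]

-- split vprod at index i
lemma vprod_split {N : ℕ} (w : Fin N → ℂ) (i : Fin N) :
    vprod w = (∏ j ∈ univ.erase i,
        ((if i < j then w i - w j else 1) * (if j < i then w j - w i else 1))) *
      ∏ p ∈ univ.erase i, ∏ q ∈ univ.erase i, (if p < q then w p - w q else 1) := by
  unfold vprod
  rw [← Finset.mul_prod_erase univ _ (mem_univ i)]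
  have h1 : ∏ q : Fin N, (if i < q then w i - w q else 1)
      = ∏ q ∈ univ.erase i, (if i < q then w i - w q else 1) := by
    rw [← Finset.mul_prod_erase univ _ (mem_univ i)]
    simp
  have h2 : ∀ p ∈ univ.erase i, ∏ q : Fin N, (if p < q then w p - w q else 1)
      = (if p < i then w p - w i else 1) * ∏ q ∈ univ.erase i, (if p < q then w p - w q else 1) := by
    intro p _
    rw [← Finset.mul_prod_erase univ _ (mem_univ i)]
  rw [h1, Finset.prod_congr rfl h2, Finset.prod_mul_distrib, Finset.prod_mul_distrib]
  ring

lemma vprod_update {N : ℕ} (z : Fin N → ℂ) (i : Fin N) (a : ℂ) :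
    vprod (Function.update z i a) * ∏ j ∈ univ.erase i, (z i - z j)
      = vprod z * ∏ j ∈ univ.erase i, (a - z j) := by
  rw [vprod_split (Function.update z i a) i, vprod_split z i]
  have hR : ∏ p ∈ univ.erase i, ∏ q ∈ univ.erase i,
      (if p < q then Function.update z i a p - Function.update z i a q else 1)
      = ∏ p ∈ univ.erase i, ∏ q ∈ univ.erase i, (if p < q then z p - z q else 1) := by
    apply Finset.prod_congr rfl; intro p hp; apply Finset.prod_congr rfl; intro q hq
    rw [Function.update_of_ne (Finset.mem_erase.1 hp).1, Function.update_of_ne (Finset.mem_erase.1 hq).1]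
  rw [hR]
  rw [mul_right_comm, mul_right_comm _ _ (∏ j ∈ univ.erase i, (a - z j))]
  congr 1
  rw [← Finset.prod_mul_distrib, ← Finset.prod_mul_distrib]
  apply Finset.prod_congr rfl
  intro j hj
  have hji : j ≠ i := (Finset.mem_erase.1 hj).1
  rw [Function.update_self, Function.update_of_ne hji]
  rcases lt_or_gt_of_ne hji with h | h
  · simp only [if_neg (not_lt.2 h.le), if_pos h]
    ring
  · simp only [if_pos h, if_neg (not_lt.2 h.le)]
    ring

lemma vprod_ne_zero {N : ℕ} (w : Fin N → ℂ) (hw : Function.Injective w) : vprod w ≠ 0 := by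
  unfold vprod
  rw [Finset.prod_ne_zero_iff]
  intro i _
  rw [Finset.prod_ne_zero_iff]
  intro j _
  split
  · exact sub_ne_zero.2 (fun h => absurd (hw h) (ne_of_lt (by assumption)))
  · exact one_ne_zero

/-- Eigenrelation for the multivariate Bessel function:
`∑_i ∏_{j≠i} ((z_i + c − z_j)/(z_i − z_j)) 𝓑_ℓ(z with z_i ↦ z_i + c)
 = (∑_j e^{c ℓ_j}) 𝓑_ℓ(z)`. -/
theorem statement8 (N : ℕ) (hN : 1 ≤ N) (l : Fin N → ℝ)
    (z : Fin N → ℂ) (hz : Function.Injective z) (c : ℂ)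
    (hc : ∀ i j : Fin N, i ≠ j → z i + c ≠ z j) :
    ∑ i : Fin N,
        (∏ j ∈ Finset.univ.erase i, (z i + c - z j) / (z i - z j)) *
          besselFun N l (Function.update z i (z i + c)) =
      (∑ j : Fin N, Complex.exp (c * (l j : ℂ))) * besselFun N l z := by
  set A : Matrix (Fin N) (Fin N) ℂ := Matrix.of fun i j : Fin N => Complex.exp (z i * (l j : ℂ))
    with hA
  have hVz : vprod z ≠ 0 := vprod_ne_zero z hz
  have hmain : ∀ i : Fin N,
      (∏ j ∈ Finset.univ.erase i, (z i + c - z j) / (z i - z j)) *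
        besselFun N l (Function.update z i (z i + c))
      = (A.updateRow i (fun j => A i j * Complex.exp (c * (l j : ℂ)))).det / vprod z := by
    intro i
    set w : Fin N → ℂ := Function.update z i (z i + c) with hwdef
    have hwj : ∀ j : Fin N, j ≠ i → w j = z j := fun j hj => Function.update_of_ne hj _ _
    have hwi : w i = z i + c := Function.update_self _ _ _
    have hwinj : Function.Injective w := by
      intro p q hpq
      by_contra hne
      rcases eq_or_ne p i with hpi | hpi
      · rcases eq_or_ne q i with hqi | hqi
        · exact hne (hpi.trans hqi.symm)
        · rw [hpi] at hpq
          rw [hwi, hwj q hqi] at hpq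
          exact hc i q (Ne.symm hqi) hpq
      · rcases eq_or_ne q i with hqi | hqi
        · rw [hqi] at hpq
          rw [hwi, hwj p hpi] at hpq
          exact hc i p (Ne.symm hpi) hpq.symm
        · exact hne (hz (by rw [← hwj p hpi, ← hwj q hqi, hpq]))
    have hVw : vprod w ≠ 0 := vprod_ne_zero w hwinj
    have hM : (Matrix.of fun p j : Fin N => Complex.exp (w p * (l j : ℂ)))
        = A.updateRow i (fun j => A i j * Complex.exp (c * (l j : ℂ))) := by
      ext p j
      rcases eq_or_ne p i with rfl | hp
      · simp only [Matrix.of_apply, Matrix.updateRow_self, hwi, hA]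
        rw [← Complex.exp_add]
        ring_nf
      · simp only [Matrix.of_apply, Matrix.updateRow_ne hp, hwj p hp, hA]
    have hB : besselFun N l w
        = (A.updateRow i (fun j => A i j * Complex.exp (c * (l j : ℂ)))).det / vprod w := by
      rw [besselFun, hM]
    rw [hB]
    set D := (A.updateRow i (fun j => A i j * Complex.exp (c * (l j : ℂ)))).det with hD
    have hcoef : (∏ j ∈ Finset.univ.erase i, (z i + c - z j) / (z i - z j))
        = (∏ j ∈ Finset.univ.erase i, (z i + c - z j)) /
          (∏ j ∈ Finset.univ.erase i, (z i - z j)) := by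
      rw [Finset.prod_div_distrib]
    have hrel : vprod w * ∏ j ∈ univ.erase i, (z i - z j)
        = vprod z * ∏ j ∈ univ.erase i, (z i + c - z j) := vprod_update z i (z i + c)
    have hQ : (∏ j ∈ Finset.univ.erase i, (z i - z j)) ≠ 0 := by
      rw [Finset.prod_ne_zero_iff]
      intro j hj
      exact sub_ne_zero.2 (fun h => (Finset.mem_erase.1 hj).1 (hz h).symm)
    rw [hcoef, div_mul_div_comm, div_eq_div_iff (mul_ne_zero hQ hVw) hVz]
    linear_combination -D * hrel
  rw [Finset.sum_congr rfl (fun i _ => hmain i), ← Finset.sum_div, sum_det_updateRow,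
    besselFun, mul_div_assoc]
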